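/- arXiv:1801.07673 — 6 statements merged into one kernel-verified Lean document; each statement's English description precedes it below -/
import Mathlib

section
/- Let p be a real number with 0 ≤ p < 1, let ε be a real number with 0 ≤ ε ≤ 1, and let d ≥ 1 be a natural number. Then Q(p, ε, d) attains its maximum value log d, i.e. Q(p, ε, d) = log d, if and only if ε/(1 − p) ≥ 1 − 1/d². -/
/-- The greatest natural number `m` with `1 ≤ m`, `(m : ℝ) ≤ √(1/(1 - ε/(1 - p)))`,
and `m ≤ d` (as a supremum in `ℕ`). -/
noncomputable def M (p ε : ℝ) (d : ℕ) : ℕ :=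
  sSup {m : ℕ | 1 ≤ m ∧ (m : ℝ) ≤ Real.sqrt (1 / (1 - ε / (1 - p))) ∧ m ≤ d}

/-- The one-shot entanglement transmission capacity of a harmonic clean model. -/
noncomputable def Q (p ε : ℝ) (d : ℕ) : ℝ :=
  if p < 1 - ε then Real.log (M p ε d) else Real.log d

theorem stmt_5 (p ε : ℝ) (hp0 : 0 ≤ p) (hp1 : p < 1) (hε0 : 0 ≤ ε) (hε1 : ε ≤ 1)
    (d : ℕ) (hd : 1 ≤ d) :
    Q p ε d = Real.log d ↔ ε / (1 - p) ≥ 1 - 1 / (d : ℝ) ^ 2 := by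
  have h1p : (0:ℝ) < 1 - p := by linarith
  have hd1 : (1:ℝ) ≤ (d:ℝ) := by exact_mod_cast hd
  have hdpos : (0:ℝ) < (d:ℝ) := by linarith
  have hd2 : (0:ℝ) < (d:ℝ)^2 := by positivity
  by_cases hc : p < 1 - ε
  · set t := ε / (1 - p) with htdef
    have ht1 : t < 1 := (div_lt_one h1p).2 (by linarith)
    have ht0 : 0 ≤ t := div_nonneg hε0 h1p.le
    have hpos : 0 < 1 - t := by linarith
    have hx0 : (0:ℝ) ≤ 1 / (1 - t) := by positivity
    have hx1 : (1:ℝ) ≤ 1 / (1 - t) := by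
      rw [le_div_iff₀ hpos]; linarith
    have hs1 : (1:ℝ) ≤ Real.sqrt (1 / (1 - t)) := by
      have := Real.sqrt_le_sqrt hx1
      simpa using this
    have hbdd : BddAbove {m : ℕ | 1 ≤ m ∧ (m : ℝ) ≤ Real.sqrt (1 / (1 - t)) ∧ m ≤ d} :=
      ⟨d, fun m hm => hm.2.2⟩
    have hmem1 : 1 ∈ {m : ℕ | 1 ≤ m ∧ (m : ℝ) ≤ Real.sqrt (1 / (1 - t)) ∧ m ≤ d} :=
      ⟨le_refl 1, by simpa using hs1, hd⟩
    have hMmem : M p ε d ∈ {m : ℕ | 1 ≤ m ∧ (m : ℝ) ≤ Real.sqrt (1 / (1 - t)) ∧ m ≤ d} := by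
      rw [M]
      exact Nat.sSup_mem ⟨1, hmem1⟩ hbdd
    have hM1 : 1 ≤ M p ε d := hMmem.1
    have hMd : M p ε d ≤ d := hMmem.2.2
    have key : ((d:ℝ) ≤ Real.sqrt (1/(1-t))) ↔ (1 - 1/(d:ℝ)^2 ≤ t) := by
      rw [Real.le_sqrt hdpos.le hx0, le_div_iff₀ hpos]
      have h2 : (1:ℝ)/(d:ℝ)^2 * (d:ℝ)^2 = 1 := by field_simp
      constructor <;> intro h <;> nlinarith [h, h2, hd2]
    rw [Q, if_pos hc]
    constructor
    · intro h
      have hMeq : M p ε d = d := by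
        by_contra hne
        have hlt : M p ε d < d := lt_of_le_of_ne hMd hne
        have : Real.log (M p ε d) < Real.log d :=
          Real.log_lt_log (by exact_mod_cast hM1) (by exact_mod_cast hlt)
        linarith [this, h.le, h.ge]
      have : (d:ℝ) ≤ Real.sqrt (1/(1-t)) := by
        have := hMmem.2.1
        rwa [hMeq] at this
      exact key.1 this
    · intro h
      have hdmem : d ∈ {m : ℕ | 1 ≤ m ∧ (m : ℝ) ≤ Real.sqrt (1 / (1 - t)) ∧ m ≤ d} :=
        ⟨hd, key.2 h, le_refl d⟩
      have : M p ε d = d := le_antisymm hMd (by rw [M]; exact le_csSup hbdd hdmem)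
      rw [this]
  · rw [Q, if_neg hc]
    have hle : 1 - p ≤ ε := by
      push_neg at hc; linarith
    have ht1 : (1:ℝ) ≤ ε / (1 - p) := (le_div_iff₀ h1p).2 (by linarith)
    have hrhs : ε / (1 - p) ≥ 1 - 1 / (d:ℝ)^2 := by
      have : (0:ℝ) ≤ 1 / (d:ℝ)^2 := by positivity
      linarith
    exact iff_of_true rfl hrhs
end

section
/- Let p be a real number with 0 ≤ p ≤ 1, let ε be a real number with 0 ≤ ε ≤ 1, and let d ≥ 2 be a natural number. Then Q(p, ε, d) = 0 if and only if p < 1 − (4/3)·ε. -/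
theorem stmt_6 (p ε : ℝ) (hp0 : 0 ≤ p) (hp1 : p ≤ 1) (hε0 : 0 ≤ ε) (hε1 : ε ≤ 1)
    (d : ℕ) (hd : 2 ≤ d) :
    Q p ε d = 0 ↔ p < 1 - (4 / 3) * ε := by
  set S : Set ℕ := {m : ℕ | 1 ≤ m ∧ (m : ℝ) ≤ Real.sqrt (1 / (1 - ε / (1 - p))) ∧ m ≤ d}
    with hS
  have hbdd : BddAbove S := ⟨d, fun m hm => hm.2.2⟩
  constructor
  · intro hQ
    by_cases hpe : p < 1 - ε
    · have h1p : (0:ℝ) < 1 - p := by linarith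
      have ht : ε / (1 - p) < 1 := (div_lt_one h1p).mpr (by linarith)
      by_contra hcon
      push_neg at hcon
      -- Then ε > 0 and ε/(1-p) ≥ 3/4, so 1/(1-t) ≥ 4 and sqrt ≥ 2.
      have hε : 0 < ε := by nlinarith
      have ht34 : (3:ℝ)/4 ≤ ε / (1 - p) := by
        rw [le_div_iff₀ h1p]; nlinarith
      have hx4 : (4:ℝ) ≤ 1 / (1 - ε / (1 - p)) := by
        rw [le_div_iff₀ (by linarith)]; linarith
      have h2sqrt : (2:ℝ) ≤ Real.sqrt (1 / (1 - ε / (1 - p))) := by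
        have := Real.sqrt_le_sqrt hx4
        rwa [show (4:ℝ) = 2^2 by norm_num, Real.sqrt_sq (by norm_num)] at this
      have h2S : 2 ∈ S := ⟨by norm_num, by exact_mod_cast h2sqrt, hd⟩
      have hM2 : 2 ≤ M p ε d := le_csSup hbdd h2S
      have : Real.log (M p ε d) > 0 := Real.log_pos (by exact_mod_cast hM2)
      rw [Q, if_pos hpe] at hQ
      linarith
    · rw [Q, if_neg hpe] at hQ
      have : Real.log d > 0 := Real.log_pos (by exact_mod_cast hd)
      linarith
  · intro h
    have hpe : p < 1 - ε := by nlinarith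
    have h1p : (0:ℝ) < 1 - p := by linarith
    have ht : ε / (1 - p) < 3/4 := by
      rw [div_lt_iff₀ h1p]; nlinarith
    have ht0 : 0 ≤ ε / (1 - p) := div_nonneg hε0 h1p.le
    have hx1 : (1:ℝ) ≤ 1 / (1 - ε / (1 - p)) := by
      rw [le_div_iff₀ (by linarith)]; linarith
    have hx4 : 1 / (1 - ε / (1 - p)) < 4 := by
      rw [div_lt_iff₀ (by linarith)]; linarith
    have hsqrt2 : Real.sqrt (1 / (1 - ε / (1 - p))) < 2 := by
      rw [show (2:ℝ) = Real.sqrt 4 by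
        rw [show (4:ℝ) = 2^2 by norm_num, Real.sqrt_sq (by norm_num)]]
      exact Real.sqrt_lt_sqrt (by linarith) hx4
    have hsqrt1 : (1:ℝ) ≤ Real.sqrt (1 / (1 - ε / (1 - p))) := by
      have := Real.sqrt_le_sqrt hx1
      rwa [Real.sqrt_one] at this
    have h1S : 1 ∈ S := ⟨le_refl 1, by simpa using hsqrt1, by omega⟩
    have hM : M p ε d = 1 := by
      refine le_antisymm (csSup_le ⟨1, h1S⟩ fun m hm => ?_) (le_csSup hbdd h1S)
      have : (m : ℝ) < 2 := lt_of_le_of_lt hm.2.1 hsqrt2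
      exact_mod_cast Nat.lt_succ_iff.mp (by exact_mod_cast this)
    rw [Q, if_pos hpe, hM]
    simp
end

section
/- Let p be a real number with 0 ≤ p < 1, let ε be a real number with 0 ≤ ε ≤ 1, let d ≥ 1 be a natural number, and let k be a natural number with 1 ≤ k ≤ d. Then Q(p, ε, d) ≥ log k if and only if ε ≥ (1 − p)·(1 − 1/k²). -/
theorem stmt_8 (p ε : ℝ) (hp0 : 0 ≤ p) (hp1 : p < 1) (hε0 : 0 ≤ ε) (hε1 : ε ≤ 1)
    (d : ℕ) (hd : 1 ≤ d) (k : ℕ) (hk1 : 1 ≤ k) (hkd : k ≤ d) :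
    Q p ε d ≥ Real.log k ↔ ε ≥ (1 - p) * (1 - 1 / (k : ℝ) ^ 2) := by
  have h1p : (0:ℝ) < 1 - p := by linarith
  have hk0 : (0:ℝ) < k := by exact_mod_cast hk1
  have hk2 : (0:ℝ) < (k:ℝ)^2 := by positivity
  unfold Q
  by_cases hc : p < 1 - ε
  · rw [if_pos hc]
    have hs : 0 < 1 - ε / (1 - p) := by
      rw [sub_pos, div_lt_one h1p]; linarith
    have hs1 : 1 - ε / (1 - p) ≤ 1 := by
      have : 0 ≤ ε / (1 - p) := div_nonneg hε0 h1p.le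
      linarith
    set S := {m : ℕ | 1 ≤ m ∧ (m : ℝ) ≤ Real.sqrt (1 / (1 - ε / (1 - p))) ∧ m ≤ d} with hS
    have hs' : (0:ℝ) ≤ 1 / (1 - ε / (1 - p)) := by positivity
    have hss : (1 / (1 - ε / (1 - p))) * (1 - ε / (1 - p)) = 1 :=
      one_div_mul_cancel hs.ne'
    have hge1 : (1:ℝ) ≤ 1 / (1 - ε / (1 - p)) := by
      rw [le_div_iff₀ hs]; linarith
    have hone : 1 ∈ S := by
      refine ⟨le_refl 1, ?_, hd⟩
      rw [Nat.cast_one]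
      calc (1:ℝ) = Real.sqrt 1 := Real.sqrt_one.symm
        _ ≤ _ := Real.sqrt_le_sqrt hge1
    have hbdd : BddAbove S := ⟨d, fun m hm => hm.2.2⟩
    have hMmem : M p ε d ∈ S := Nat.sSup_mem ⟨1, hone⟩ hbdd
    have hM1 : 1 ≤ M p ε d := hMmem.1
    have hM0 : (0:ℝ) < (M p ε d : ℝ) := by exact_mod_cast hM1
    have hlog : Real.log (M p ε d) ≥ Real.log k ↔ k ≤ M p ε d := by
      rw [ge_iff_le, Real.log_le_log_iff hk0 hM0, Nat.cast_le]
    rw [hlog]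
    constructor
    · intro hkM
      have hkS : (k:ℝ) ≤ Real.sqrt (1 / (1 - ε / (1 - p))) :=
        le_trans (by exact_mod_cast hkM) hMmem.2.1
      have : (k:ℝ)^2 ≤ 1 / (1 - ε / (1 - p)) := by
        rwa [Real.le_sqrt' hk0] at hkS
      have h2 : 1 - ε / (1 - p) ≤ 1 / (k:ℝ)^2 := by
        rw [le_div_iff₀ hk2]
        nlinarith [mul_le_mul_of_nonneg_right this hs.le]
      have h3 : 1 - 1 / (k:ℝ)^2 ≤ ε / (1 - p) := by linarith
      rw [ge_iff_le, mul_comm, ← le_div_iff₀ h1p]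
      exact h3
    · intro hε
      have h3 : 1 - 1 / (k:ℝ)^2 ≤ ε / (1 - p) := by
        rw [ge_iff_le, mul_comm, ← le_div_iff₀ h1p] at hε; exact hε
      have h2 : 1 - ε / (1 - p) ≤ 1 / (k:ℝ)^2 := by linarith
      have hsq : (k:ℝ)^2 ≤ 1 / (1 - ε / (1 - p)) := by
        rw [le_div_iff₀ hs]
        have := mul_le_mul_of_nonneg_left h2 hk2.le
        have hkk : (k:ℝ)^2 * (1 / (k:ℝ)^2) = 1 := by field_simp
        linarith
      have hkS : k ∈ S := ⟨hk1, by rwa [Real.le_sqrt' hk0], hkd⟩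
      exact le_csSup hbdd hkS
  · rw [if_neg hc]
    push_neg at hc
    constructor
    · intro _
      have : 1 - p ≤ ε := by linarith
      have h1 : (1 - p) * (1 - 1 / (k:ℝ)^2) ≤ (1 - p) * 1 := by
        apply mul_le_mul_of_nonneg_left _ h1p.le
        have : 0 < 1 / (k:ℝ)^2 := by positivity
        linarith
      rw [mul_one] at h1
      exact le_trans h1 this
    · intro _
      apply Real.log_le_log hk0
      exact_mod_cast hkd
end

section
/- Let p be a real number with 0 ≤ p ≤ 1 and let d ≥ 2 be a natural number. Then the supremum (in ℝ, with the convention that the supremum of the empty set is 0) of the set {ε : ℝ | 0 ≤ ε ≤ 1 ∧ Q(p, ε, d) = 0} equals (3/4)·(1 − p). Consequently the probability p of the causal relation A→B is determined by the family of capacities ε ↦ Q(p, ε, d). -/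
lemma aux_Q_zero (p ε : ℝ) (d : ℕ) (hd : 2 ≤ d) (hε0 : 0 ≤ ε)
    (hεlt : ε < (3/4) * (1 - p)) : Q p ε d = 0 := by
  have h1p : 0 < 1 - p := by nlinarith
  have ht : ε / (1 - p) < 3/4 := by rw [div_lt_iff₀ h1p]; nlinarith
  have ht0 : 0 ≤ ε / (1 - p) := div_nonneg hε0 h1p.le
  have hden : 0 < 1 - ε / (1 - p) := by linarith
  have hx1 : (1:ℝ) ≤ 1 / (1 - ε / (1 - p)) := by rw [le_div_iff₀ hden]; nlinarith
  have hx4 : 1 / (1 - ε / (1 - p)) < 4 := by rw [div_lt_iff₀ hden]; nlinarith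
  have hs1 : (1:ℝ) ≤ Real.sqrt (1 / (1 - ε / (1 - p))) :=
    calc (1:ℝ) = Real.sqrt 1 := Real.sqrt_one.symm
    _ ≤ _ := Real.sqrt_le_sqrt hx1
  have hs2 : Real.sqrt (1 / (1 - ε / (1 - p))) < 2 := by
    have := Real.sqrt_lt' (x := 1 / (1 - ε / (1 - p))) (y := 2) (by norm_num)
    rw [this]; nlinarith
  have hplt : p < 1 - ε := by nlinarith
  have hM : M p ε d = 1 := by
    unfold M
    have : {m : ℕ | 1 ≤ m ∧ (m : ℝ) ≤ Real.sqrt (1 / (1 - ε / (1 - p))) ∧ m ≤ d}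
        = {1} := by
      ext m
      simp only [Set.mem_setOf_eq, Set.mem_singleton_iff]
      constructor
      · rintro ⟨h1, h2, _⟩
        have : (m : ℝ) < 2 := lt_of_le_of_lt h2 hs2
        have : m < 2 := by exact_mod_cast this
        omega
      · rintro rfl
        exact ⟨le_refl 1, by simpa using hs1, by omega⟩
    rw [this, csSup_singleton]
  simp [Q, hplt, hM]

lemma aux_lt (p ε : ℝ) (d : ℕ) (hd : 2 ≤ d) (hε0 : 0 ≤ ε)
    (hQ : Q p ε d = 0) : ε < (3/4) * (1 - p) := by
  by_contra hge
  push_neg at hge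
  rcases lt_or_ge ε (1 - p) with hεp | hεp
  · -- p < 1 - ε
    have h1p : 0 < 1 - p := by linarith
    have hplt : p < 1 - ε := by linarith
    have ht : (3:ℝ)/4 ≤ ε / (1 - p) := by rw [le_div_iff₀ h1p]; nlinarith
    have ht1 : ε / (1 - p) < 1 := by rw [div_lt_iff₀ h1p]; nlinarith
    have hden : 0 < 1 - ε / (1 - p) := by linarith
    have hx4 : (4:ℝ) ≤ 1 / (1 - ε / (1 - p)) := by rw [le_div_iff₀ hden]; nlinarith
    have hs2 : (2:ℝ) ≤ Real.sqrt (1 / (1 - ε / (1 - p))) := by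
      rw [show (2:ℝ) = Real.sqrt 4 by
        rw [show (4:ℝ) = 2^2 by norm_num, Real.sqrt_sq (by norm_num)]]
      exact Real.sqrt_le_sqrt hx4
    have hbdd : BddAbove {m : ℕ | 1 ≤ m ∧
        (m : ℝ) ≤ Real.sqrt (1 / (1 - ε / (1 - p))) ∧ m ≤ d} :=
      ⟨d, fun m hm => hm.2.2⟩
    have h2mem : 2 ∈ {m : ℕ | 1 ≤ m ∧
        (m : ℝ) ≤ Real.sqrt (1 / (1 - ε / (1 - p))) ∧ m ≤ d} :=
      ⟨by norm_num, by exact_mod_cast hs2, hd⟩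
    have hM2 : 2 ≤ M p ε d := le_csSup hbdd h2mem
    have hlogpos : 0 < Real.log (M p ε d) := by
      apply Real.log_pos
      have : (2:ℝ) ≤ (M p ε d : ℝ) := by exact_mod_cast hM2
      linarith
    rw [Q, if_pos hplt] at hQ
    linarith
  · -- p ≥ 1 - ε
    have hplt : ¬ p < 1 - ε := by linarith
    rw [Q, if_neg hplt] at hQ
    have : 0 < Real.log d := by
      apply Real.log_pos
      have : (2:ℝ) ≤ (d : ℝ) := by exact_mod_cast hd
      linarith
    linarith

theorem stmt_9 (p : ℝ) (hp0 : 0 ≤ p) (hp1 : p ≤ 1) (d : ℕ) (hd : 2 ≤ d) :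
    sSup {ε : ℝ | 0 ≤ ε ∧ ε ≤ 1 ∧ Q p ε d = 0} = (3 / 4) * (1 - p) := by
  rcases eq_or_lt_of_le hp1 with hp | hp
  · -- p = 1
    have hempty : {ε : ℝ | 0 ≤ ε ∧ ε ≤ 1 ∧ Q p ε d = 0} = ∅ := by
      ext ε
      simp only [Set.mem_setOf_eq, Set.mem_empty_iff_false, iff_false]
      rintro ⟨h0, h1, hQ⟩
      have := aux_lt p ε d hd h0 hQ
      rw [← hp] at this
      linarith
    rw [hempty, Real.sSup_empty, ← hp]
    ring
  · -- p < 1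
    have hset : {ε : ℝ | 0 ≤ ε ∧ ε ≤ 1 ∧ Q p ε d = 0}
        = Set.Ico 0 ((3/4) * (1 - p)) := by
      ext ε
      simp only [Set.mem_setOf_eq, Set.mem_Ico]
      constructor
      · rintro ⟨h0, h1, hQ⟩
        exact ⟨h0, aux_lt p ε d hd h0 hQ⟩
      · rintro ⟨h0, h1⟩
        refine ⟨h0, by nlinarith, aux_Q_zero p ε d hd h0 h1⟩
    rw [hset, csSup_Ico (by nlinarith)]
end

section
/- Let p, p' be real numbers with 0 ≤ p ≤ 1 and 0 ≤ p' ≤ 1, and let d, d' be natural numbers with d ≥ 2 and d' ≥ 2. If Q(p, ε, d) = Q(p', ε, d') for every real ε with 0 ≤ ε ≤ 1, then p = p'. (The capacities Q_ent^→(W; ε) indexed by ε determine the probability amplitude modulus |α₁| = √p of the causal relation A→B of an unknown harmonic clean model.) -/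
lemma Q_eq_zero_iff (p ε : ℝ) (hp1 : p ≤ 1) (hε : 0 ≤ ε) (d : ℕ) (hd : 2 ≤ d) :
    Q p ε d = 0 ↔ ε < 3 * (1 - p) / 4 := by
  constructor
  · -- contrapositive: ε ≥ 3(1-p)/4 → Q ≠ 0
    intro hQ
    by_contra hge
    push_neg at hge
    have h2 : (0:ℝ) < Real.log d := by
      apply Real.log_pos
      exact_mod_cast lt_of_lt_of_le one_lt_two (by exact_mod_cast hd)
    by_cases hlt : p < 1 - ε
    · -- then 1 - p > ε ≥ 3(1-p)/4, so 1-p > 0, t := ε/(1-p) ∈ [3/4,1)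
      have h1p : 0 < 1 - p := lt_of_le_of_lt hε (by linarith)
      have ht : (3:ℝ)/4 ≤ ε / (1 - p) := by
        rw [le_div_iff₀ h1p]; linarith
      have ht1 : ε / (1 - p) < 1 := (div_lt_one h1p).mpr (by linarith)
      have hden : 0 < 1 - ε / (1 - p) := by linarith
      have h4 : (4:ℝ) ≤ 1 / (1 - ε / (1 - p)) := by
        rw [le_div_iff₀ hden]; linarith
      have hsqrt : (2:ℝ) ≤ Real.sqrt (1 / (1 - ε / (1 - p))) := by
        have := Real.sqrt_le_sqrt h4
        rwa [show (4:ℝ) = 2^2 by norm_num, Real.sqrt_sq (by norm_num : (0:ℝ) ≤ 2)] at this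
      have hbdd : BddAbove {m : ℕ | 1 ≤ m ∧ (m : ℝ) ≤ Real.sqrt (1 / (1 - ε / (1 - p))) ∧ m ≤ d} :=
        ⟨d, fun m hm => hm.2.2⟩
      have h2mem : 2 ∈ {m : ℕ | 1 ≤ m ∧ (m : ℝ) ≤ Real.sqrt (1 / (1 - ε / (1 - p))) ∧ m ≤ d} := by
        refine ⟨one_le_two, ?_, hd⟩
        exact_mod_cast hsqrt
      have hM : 2 ≤ M p ε d := le_csSup hbdd h2mem
      have : (0:ℝ) < Real.log (M p ε d) := by
        apply Real.log_pos
        exact_mod_cast lt_of_lt_of_le one_lt_two (by exact_mod_cast hM)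
      rw [Q, if_pos hlt] at hQ
      linarith
    · rw [Q, if_neg hlt] at hQ
      linarith
  · intro hlt
    have h1p : 0 < 1 - p := by nlinarith
    have hplt : p < 1 - ε := by nlinarith
    have ht : ε / (1 - p) < 3/4 := by
      rw [div_lt_iff₀ h1p]; linarith
    have ht0 : 0 ≤ ε / (1 - p) := div_nonneg hε h1p.le
    have hden : (1:ℝ)/4 < 1 - ε / (1 - p) := by linarith
    have hle1 : 1 ≤ 1 / (1 - ε / (1 - p)) := by
      rw [le_div_iff₀ (by linarith)]; linarith
    have hlt4 : 1 / (1 - ε / (1 - p)) < 4 := by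
      rw [div_lt_iff₀ (by linarith)]; linarith
    have hs1 : 1 ≤ Real.sqrt (1 / (1 - ε / (1 - p))) := by
      rw [Real.le_sqrt' one_pos]
      nlinarith
    have hs2 : Real.sqrt (1 / (1 - ε / (1 - p))) < 2 := by
      rw [show (2:ℝ) = Real.sqrt 4 by rw [show (4:ℝ) = 2^2 by norm_num, Real.sqrt_sq]; norm_num]
      exact Real.sqrt_lt_sqrt (by linarith) hlt4
    have hset : {m : ℕ | 1 ≤ m ∧ (m : ℝ) ≤ Real.sqrt (1 / (1 - ε / (1 - p))) ∧ m ≤ d} = {1} := by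
      ext m
      simp only [Set.mem_setOf_eq, Set.mem_singleton_iff]
      constructor
      · rintro ⟨h1, h2, _⟩
        have : (m:ℝ) < 2 := lt_of_le_of_lt h2 hs2
        have : m < 2 := by exact_mod_cast this
        omega
      · rintro rfl
        exact ⟨le_refl 1, by exact_mod_cast hs1, by omega⟩
    rw [Q, if_pos hplt, M, hset, csSup_singleton]
    simp

theorem stmt_10 (p p' : ℝ) (hp0 : 0 ≤ p) (hp1 : p ≤ 1) (hp'0 : 0 ≤ p') (hp'1 : p' ≤ 1)
    (d d' : ℕ) (hd : 2 ≤ d) (hd' : 2 ≤ d')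
    (h : ∀ ε : ℝ, 0 ≤ ε → ε ≤ 1 → Q p ε d = Q p' ε d') :
    p = p' := by
  by_contra hne
  have key : ∀ (q q' : ℝ) (n n' : ℕ), 0 ≤ q → q ≤ 1 → 0 ≤ q' → q' ≤ 1 → 2 ≤ n → 2 ≤ n' → q < q' →
      (∀ ε : ℝ, 0 ≤ ε → ε ≤ 1 → (Q q ε n = 0 ↔ Q q' ε n' = 0)) → False := by
    intro q q' n n' hq0 hq1 hq'0 hq'1 hn hn' hlt heq
    set ε := (3 * (1 - q) / 4 + 3 * (1 - q') / 4) / 2 with hε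
    have hε0 : 0 ≤ ε := by rw [hε]; nlinarith
    have hε1 : ε ≤ 1 := by rw [hε]; nlinarith
    have h1 : ε < 3 * (1 - q) / 4 := by rw [hε]; nlinarith
    have h2 : ¬ (ε < 3 * (1 - q') / 4) := by rw [hε]; push_neg; nlinarith
    have hq := (Q_eq_zero_iff q ε hq1 hε0 n hn).mpr h1
    have hq' := (heq ε hε0 hε1).mp hq
    exact h2 ((Q_eq_zero_iff q' ε hq'1 hε0 n' hn').mp hq')
  rcases lt_or_gt_of_ne hne with hlt | hlt
  · exact key p p' d d' hp0 hp1 hp'0 hp'1 hd hd' hlt (fun ε he0 he1 => by rw [h ε he0 he1])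
  · exact key p' p d' d hp'0 hp'1 hp0 hp1 hd' hd hlt (fun ε he0 he1 => by rw [← h ε he0 he1])
end

section
/- Let p be a real number with 0 ≤ p ≤ 1 and let d ≥ 2 be a natural number. Then Q(p, ε, d) > 0 if and only if ε ≥ (3/4)·(1 − p), for every real ε with 0 ≤ ε ≤ 1. In particular, whenever p ≥ 1 − (4/3)·ε there is a strictly positive one-shot entanglement transmission capacity in the direction A→B. -/
theorem stmt_12 (p : ℝ) (hp0 : 0 ≤ p) (hp1 : p ≤ 1) (d : ℕ) (hd : 2 ≤ d) :
    ∀ ε : ℝ, 0 ≤ ε → ε ≤ 1 → (Q p ε d > 0 ↔ ε ≥ (3 / 4) * (1 - p)) := by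
  intro ε hε0 hε1
  by_cases hc : p < 1 - ε
  · have hden : 0 < 1 - p - ε := by linarith
    have h1p : 0 < 1 - p := by linarith
    have hx : 1 / (1 - ε / (1 - p)) = (1 - p) / (1 - p - ε) := by
      field_simp
    have hx1 : (1 : ℝ) ≤ 1 / (1 - ε / (1 - p)) := by
      rw [hx, le_div_iff₀ hden]; linarith
    have hx0 : (0 : ℝ) ≤ 1 / (1 - ε / (1 - p)) := by linarith
    have hsqrt1 : (1 : ℝ) ≤ Real.sqrt (1 / (1 - ε / (1 - p))) := by
      calc (1:ℝ) = Real.sqrt 1 := by simp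
        _ ≤ _ := Real.sqrt_le_sqrt hx1
    set S := {m : ℕ | 1 ≤ m ∧ (m : ℝ) ≤ Real.sqrt (1 / (1 - ε / (1 - p))) ∧ m ≤ d}
      with hS
    have hmem1 : 1 ∈ S := ⟨le_refl _, by simpa using hsqrt1, by omega⟩
    have hbdd : BddAbove S := ⟨d, fun m hm => hm.2.2⟩
    have hM1 : 1 ≤ M p ε d := le_csSup hbdd hmem1
    have hQ : Q p ε d = Real.log (M p ε d) := if_pos hc
    constructor
    · intro hQpos
      rw [hQ] at hQpos
      have hM2 : 2 ≤ M p ε d := by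
        by_contra h
        have : M p ε d = 1 := by omega
        rw [this] at hQpos; simp at hQpos
      have hMmem : M p ε d ∈ S := Nat.sSup_mem ⟨1, hmem1⟩ hbdd
      have h2sqrt : (2 : ℝ) ≤ Real.sqrt (1 / (1 - ε / (1 - p))) := by
        calc (2 : ℝ) ≤ (M p ε d : ℝ) := by exact_mod_cast hM2
          _ ≤ _ := hMmem.2.1
      have h4 : (4 : ℝ) ≤ 1 / (1 - ε / (1 - p)) := by
        have := Real.sq_sqrt hx0
        nlinarith [Real.sqrt_nonneg (1 / (1 - ε / (1 - p)))]
      rw [hx, le_div_iff₀ hden] at h4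
      linarith
    · intro hε
      have h4 : (4 : ℝ) ≤ 1 / (1 - ε / (1 - p)) := by
        rw [hx, le_div_iff₀ hden]; linarith
      have h2sqrt : (2 : ℝ) ≤ Real.sqrt (1 / (1 - ε / (1 - p))) := by
        rw [show (2:ℝ) = Real.sqrt 4 by
          rw [show (4:ℝ) = 2^2 by norm_num, Real.sqrt_sq (by norm_num)]]
        exact Real.sqrt_le_sqrt h4
      have hmem2 : 2 ∈ S := ⟨by norm_num, by simpa using h2sqrt, hd⟩
      have hM2 : 2 ≤ M p ε d := le_csSup hbdd hmem2
      rw [hQ]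
      exact Real.log_pos (by exact_mod_cast hM2.trans_lt' (by norm_num))
  · have hQ : Q p ε d = Real.log d := if_neg hc
    constructor
    · intro _
      push_neg at hc
      nlinarith
    · intro _
      rw [hQ]
      exact Real.log_pos (by exact_mod_cast Nat.lt_of_lt_of_le one_lt_two hd)
end
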